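/- arXiv:2508.17392 — 4 statements merged into one kernel-verified Lean document; each statement's English description precedes it below -/
import Mathlib

section
/- For every unitary A ∈ U(d) there exists a unitary B ∈ U(d) with B² = 1 such that ‖B − A‖_p ≤ ‖1 − A²‖_p, for every Schatten p-norm with 1 ≤ p < ∞. -/
open scoped Matrix ComplexOrder

open Matrix in
/-- The Schatten `p`-norm: `(∑ σᵢ(A)^p)^(1/p)` where `σᵢ(A) = √(eigenvalues of AᴴA)`,
which equals `(Tr |A|^p)^(1/p)`. -/
noncomputable def schattenNorm {n : ℕ} (p : ℝ) (A : Matrix (Fin n) (Fin n) ℂ) : ℝ :=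
  (∑ i, Real.sqrt ((Matrix.isHermitian_conjTranspose_mul_self A).eigenvalues i) ^ p) ^ (1 / p)

/-- The operator norm of a matrix, acting on Euclidean space. -/
noncomputable def opNorm {n : ℕ} (A : Matrix (Fin n) (Fin n) ℂ) : ℝ :=
  ‖Matrix.toEuclideanCLM (𝕜 := ℂ) (n := Fin n) A‖

open Matrix Polynomial in
lemma charpoly_unitary_conj_diag {d : ℕ} {V : Matrix (Fin d) (Fin d) ℂ}
    (hV : V ∈ Matrix.unitaryGroup (Fin d) ℂ) (w : Fin d → ℂ) :
    (V * Matrix.diagonal w * star V).charpoly = ∏ i, (X - C (w i)) := by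
  have hV1 : V * star V = 1 := Matrix.mem_unitaryGroup_iff.mp hV
  have h1 : (V.map C) * ((star V).map C) = (1 : Matrix (Fin d) (Fin d) ℂ[X]) := by
    rw [← Matrix.map_mul, hV1]
    simp
  have key : charmatrix (V * Matrix.diagonal w * star V)
      = V.map C * charmatrix (Matrix.diagonal w) * (star V).map C := by
    rw [charmatrix, charmatrix]
    have hscal : V.map C * Matrix.scalar (Fin d) (X : ℂ[X]) * (star V).map C
        = Matrix.scalar (Fin d) (X : ℂ[X]) := by
      rw [← (Matrix.scalar_commute (X : ℂ[X]) (fun r => Polynomial.commute_X r)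
        (V.map C)).eq, Matrix.mul_assoc, h1, Matrix.mul_one]
    rw [Matrix.mul_sub, Matrix.sub_mul, hscal]
    congr 1
    rw [RingHom.mapMatrix_apply, RingHom.mapMatrix_apply, ← Matrix.map_mul, ← Matrix.map_mul]
  have hdet : (V.map C).det * ((star V).map C).det = 1 := by
    rw [← Matrix.det_mul, h1, Matrix.det_one]
  have : (V * Matrix.diagonal w * star V).charpoly = (Matrix.diagonal w).charpoly := by
    rw [Matrix.charpoly, key, Matrix.det_mul, Matrix.det_mul, mul_right_comm, hdet, one_mul]
    rfl
  rw [this, Matrix.charpoly_of_upperTriangular _ (Matrix.blockTriangular_diagonal _)]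
  simp

open Matrix Polynomial in
lemma sum_eig_conj_diag {d : ℕ} {P : Matrix (Fin d) (Fin d) ℂ} (hP : P.IsHermitian)
    {V : Matrix (Fin d) (Fin d) ℂ} (hV : V ∈ Matrix.unitaryGroup (Fin d) ℂ)
    (v : Fin d → ℝ) (hPV : P = V * Matrix.diagonal (fun i => ((v i : ℝ) : ℂ)) * star V)
    (g : ℝ → ℝ) : ∑ i, g (hP.eigenvalues i) = ∑ i, g (v i) := by
  have c1 : P.charpoly = ∏ i, (X - C ((v i : ℂ))) := by
    rw [hPV]; exact charpoly_unitary_conj_diag hV _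
  have c2 : P.charpoly = ∏ i, (X - C ((hP.eigenvalues i : ℂ))) := by
    conv_lhs => rw [hP.spectral_theorem]
    exact charpoly_unitary_conj_diag (hP.eigenvectorUnitary).2 _
  have hprod : Finset.univ.val.map (fun i => ((hP.eigenvalues i : ℝ) : ℂ))
      = Finset.univ.val.map (fun i => ((v i : ℝ) : ℂ)) := by
    have hc := c2.symm.trans c1
    have e1 : ∀ f : Fin d → ℂ, (∏ i, (X - C (f i)))
        = ((Finset.univ.val.map f).map (fun a => X - C a)).prod := by
      intro f; rw [Finset.prod, Multiset.map_map]; rfl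
    rw [e1, e1] at hc
    have h2 := congrArg Polynomial.roots hc
    rwa [roots_multiset_prod_X_sub_C, roots_multiset_prod_X_sub_C] at h2
  have hms : Finset.univ.val.map hP.eigenvalues = Finset.univ.val.map v := by
    apply Multiset.map_injective Complex.ofReal_injective
    rw [Multiset.map_map, Multiset.map_map]; exact hprod
  calc ∑ i, g (hP.eigenvalues i)
      = ((Finset.univ.val.map hP.eigenvalues).map g).sum := by rw [Multiset.map_map]; rfl
    _ = ((Finset.univ.val.map v).map g).sum := by rw [hms]
    _ = ∑ i, g (v i) := by rw [Multiset.map_map]; rfl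

set_option maxHeartbeats 1600000 in
theorem exists_involution_close_schatten {d : ℕ} (A : Matrix (Fin d) (Fin d) ℂ)
    (hA : A ∈ Matrix.unitaryGroup (Fin d) ℂ) :
    ∃ B ∈ Matrix.unitaryGroup (Fin d) ℂ, B ^ 2 = 1 ∧
      ∀ p : ℝ, 1 ≤ p → schattenNorm p (B - A) ≤ schattenNorm p (1 - A ^ 2) := by
  classical
  have hA2 : A * star A = 1 := Matrix.mem_unitaryGroup_iff.mp hA
  have hA1 : star A * A = 1 := Matrix.mem_unitaryGroup_iff'.mp hA
  set H : Matrix (Fin d) (Fin d) ℂ := (2⁻¹ : ℂ) • (A + star A) with hHdef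
  have hH : H.IsHermitian := by
    show star H = H
    rw [hHdef, star_smul, star_add, star_star, add_comm]
    congr 1
    simp
  set V : Matrix (Fin d) (Fin d) ℂ := ↑(hH.eigenvectorUnitary) with hVdef
  have hVmem : V ∈ Matrix.unitaryGroup (Fin d) ℂ := hH.eigenvectorUnitary.2
  have hV1 : V * star V = 1 := Matrix.mem_unitaryGroup_iff.mp hVmem
  have hV2 : star V * V = 1 := Matrix.mem_unitaryGroup_iff'.mp hVmem
  set h : Fin d → ℝ := hH.eigenvalues with hhdef
  have hSpec : star V * H * V = Matrix.diagonal (fun i => ((h i : ℝ) : ℂ)) :=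
    by have := hH.conjStarAlgAut_star_eigenvectorUnitary
       rw [Unitary.conjStarAlgAut_star_apply] at this
       exact this
  have conj_mul : ∀ X Y : Matrix (Fin d) (Fin d) ℂ,
      (V * X * star V) * (V * Y * star V) = V * (X * Y) * star V := by
    intro X Y
    calc (V * X * star V) * (V * Y * star V)
        = V * (X * ((star V * V) * (Y * star V))) := by simp only [Matrix.mul_assoc]
      _ = V * (X * Y) * star V := by rw [hV2, one_mul]; simp only [Matrix.mul_assoc]
  have conj_star : ∀ X : Matrix (Fin d) (Fin d) ℂ,
      star (V * X * star V) = V * star X * star V := by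
    intro X
    simp only [star_mul, star_star, Matrix.mul_assoc]
  have conj_one : V * 1 * star V = 1 := by rw [Matrix.mul_one, hV1]
  have hAT : V * (star V * A * V) * star V = A := by
    calc V * (star V * A * V) * star V = (V * star V) * A * (V * star V) := by
          simp only [Matrix.mul_assoc]
      _ = A := by rw [hV1, one_mul, mul_one]
  set T : Matrix (Fin d) (Fin d) ℂ := star V * A * V with hTdef
  have hstT : star T = star V * star A * V := by
    rw [hTdef]; simp only [star_mul, star_star, Matrix.mul_assoc]
  have hT1 : T * star T = 1 := by
    rw [hstT, hTdef]
    calc (star V * A * V) * (star V * star A * V)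
        = star V * (A * ((V * star V) * (star A * V))) := by simp only [Matrix.mul_assoc]
      _ = star V * (A * star A) * V := by rw [hV1, one_mul]; simp only [Matrix.mul_assoc]
      _ = 1 := by rw [hA2, Matrix.mul_one, hV2]
  have hT2 : star T * T = 1 := by
    rw [hstT, hTdef]
    calc (star V * star A * V) * (star V * A * V)
        = star V * (star A * ((V * star V) * (A * V))) := by simp only [Matrix.mul_assoc]
      _ = star V * (star A * A) * V := by rw [hV1, one_mul]; simp only [Matrix.mul_assoc]
      _ = 1 := by rw [hA1, Matrix.mul_one, hV2]
  have hAsum : A + star A = (2 : ℂ) • H := by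
    rw [hHdef, smul_smul]; norm_num
  have hsum : T + star T = Matrix.diagonal (fun i => ((2 * h i : ℝ) : ℂ)) := by
    rw [hTdef, hstT]
    calc star V * A * V + star V * star A * V
        = star V * ((A + star A) * V) := by
          rw [Matrix.add_mul, Matrix.mul_add]; simp only [Matrix.mul_assoc]
      _ = (2 : ℂ) • (star V * H * V) := by
          rw [hAsum, Matrix.smul_mul, Matrix.mul_smul, Matrix.mul_assoc]
      _ = Matrix.diagonal (fun i => ((2 * h i : ℝ) : ℂ)) := by
          rw [hSpec]
          ext i j
          by_cases hij : i = j
          · subst hij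
            simp only [Matrix.smul_apply, Matrix.diagonal_apply_eq, smul_eq_mul]
            push_cast
            ring
          · simp [Matrix.diagonal_apply_ne _ hij]
  have hsum' : ∀ i j, T i j + star (T j i)
      = Matrix.diagonal (fun i => ((2 * h i : ℝ) : ℂ)) i j := by
    intro i j
    have h0 : (T + star T) i j = Matrix.diagonal (fun i => ((2 * h i : ℝ) : ℂ)) i j := by
      rw [hsum]
    rwa [Matrix.add_apply, Matrix.star_apply] at h0
  have hcommT : T * Matrix.diagonal (fun i => ((h i : ℝ) : ℂ))
      = Matrix.diagonal (fun i => ((h i : ℝ) : ℂ)) * T := by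
    have e : T * (T + star T) = (T + star T) * T := by
      rw [mul_add, add_mul, hT1, hT2]
    have e2 : Matrix.diagonal (fun i => ((h i : ℝ) : ℂ)) = (2⁻¹ : ℂ) • (T + star T) := by
      rw [hsum]
      ext i j
      by_cases hij : i = j
      · subst hij
        simp only [Matrix.smul_apply, Matrix.diagonal_apply_eq, smul_eq_mul]
        push_cast
        ring
      · simp [Matrix.diagonal_apply_ne _ hij]
    rw [e2, mul_smul_comm, smul_mul_assoc, e]
  have hz : ∀ i j, T i j * ((h j : ℂ) - (h i : ℂ)) = 0 := by
    intro i j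
    have h0 : (T * Matrix.diagonal (fun i => ((h i : ℝ) : ℂ))) i j
        = (Matrix.diagonal (fun i => ((h i : ℝ) : ℂ)) * T) i j := by rw [hcommT]
    rw [Matrix.mul_diagonal, Matrix.diagonal_mul] at h0
    linear_combination h0
  set s : Fin d → ℝ := fun i => if 0 ≤ h i then 1 else -1 with hsdef
  have hs_sq : ∀ i, s i * s i = 1 := by
    intro i; rw [hsdef]; dsimp only; split_ifs <;> norm_num
  have hs_abs : ∀ i, s i * h i = |h i| := by
    intro i; rw [hsdef]; dsimp only
    split_ifs with hi
    · rw [abs_of_nonneg hi, one_mul]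
    · rw [abs_of_neg (lt_of_not_ge hi)]; ring
  set Ds : Matrix (Fin d) (Fin d) ℂ := Matrix.diagonal (fun i => ((s i : ℝ) : ℂ)) with hDsdef
  have hDs_star : star Ds = Ds := by
    rw [hDsdef, Matrix.star_eq_conjTranspose, Matrix.diagonal_conjTranspose]
    have e : (star fun i => ((s i : ℝ) : ℂ)) = fun i => ((s i : ℝ) : ℂ) := by
      funext i
      exact Complex.conj_ofReal _
    rw [e]
  have hDs2 : Ds * Ds = 1 := by
    rw [hDsdef, Matrix.diagonal_mul_diagonal]
    have e : (fun i => ((s i : ℝ) : ℂ) * ((s i : ℝ) : ℂ)) = fun _ => (1 : ℂ) := by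
      funext i
      rw [← Complex.ofReal_mul, hs_sq i, Complex.ofReal_one]
    rw [e, Matrix.diagonal_one]
  set B : Matrix (Fin d) (Fin d) ℂ := V * Ds * star V with hBdef
  have hBstar : star B = B := by rw [hBdef, conj_star, hDs_star]
  have hBB : B * B = 1 := by rw [hBdef, conj_mul, hDs2, conj_one]
  have hBmem : B ∈ Matrix.unitaryGroup (Fin d) ℂ := by
    rw [Matrix.mem_unitaryGroup_iff, hBstar]
    exact hBB
  have hB2 : B ^ 2 = 1 := by rw [pow_two]; exact hBB
  have hkey : Ds * T + star T * Ds = Matrix.diagonal (fun i => ((2 * |h i| : ℝ) : ℂ)) := by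
    ext i j
    rw [Matrix.add_apply, hDsdef, Matrix.diagonal_mul, Matrix.mul_diagonal, Matrix.star_apply]
    by_cases hij : i = j
    · subst hij
      have h2 := hsum' i i
      rw [Matrix.diagonal_apply_eq] at h2 ⊢
      have e : ((s i : ℝ) : ℂ) * T i i + star (T i i) * ((s i : ℝ) : ℂ)
          = ((s i : ℝ) : ℂ) * (T i i + star (T i i)) := by ring
      rw [e, h2, ← Complex.ofReal_mul]
      congr 1
      rw [show s i * (2 * h i) = 2 * (s i * h i) by ring, hs_abs i]
    · rw [Matrix.diagonal_apply_ne _ hij]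
      by_cases hh : h i = h j
      · have hsij : s i = s j := by rw [hsdef]; dsimp only; rw [hh]
        have h2 := hsum' i j
        rw [Matrix.diagonal_apply_ne _ hij] at h2
        rw [← hsij]
        linear_combination ((s i : ℝ) : ℂ) * h2
      · have hne1 : ((h j : ℂ) - (h i : ℂ)) ≠ 0 := by
          rw [sub_ne_zero]
          exact_mod_cast fun hc => hh ((Complex.ofReal_inj.mp hc).symm)
        have hne2 : ((h i : ℂ) - (h j : ℂ)) ≠ 0 := by
          rw [sub_ne_zero]
          exact_mod_cast fun hc => hh (Complex.ofReal_inj.mp hc)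
        have hz1 : T i j = 0 := (mul_eq_zero.mp (hz i j)).resolve_right hne1
        have hz2 : T j i = 0 := (mul_eq_zero.mp (hz j i)).resolve_right hne2
        rw [hz1, hz2]
        simp
  have hMdec : star (B - A) * (B - A)
      = V * Matrix.diagonal (fun i => ((2 - 2 * |h i| : ℝ) : ℂ)) * star V := by
    have hBA : B - A = V * (Ds - T) * star V := by
      rw [hBdef, ← hAT, ← Matrix.sub_mul, ← Matrix.mul_sub]
    rw [hBA, conj_star, conj_mul]
    congr 1
    congr 1
    have expand : star (Ds - T) * (Ds - T)
        = Ds * Ds - Ds * T - star T * Ds + star T * T := by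
      rw [star_sub, hDs_star, Matrix.sub_mul, Matrix.mul_sub, Matrix.mul_sub]
      abel
    rw [expand, hDs2, hT2]
    have e4 : (1 : Matrix (Fin d) (Fin d) ℂ) - Ds * T - star T * Ds + 1
        = (1 + 1) - (Ds * T + star T * Ds) := by abel
    rw [e4, hkey]
    ext i j
    by_cases hij : i = j
    · subst hij
      simp only [Matrix.sub_apply, Matrix.add_apply, Matrix.one_apply_eq,
        Matrix.diagonal_apply_eq]
      push_cast
      ring
    · simp [Matrix.one_apply_ne hij, Matrix.diagonal_apply_ne _ hij]
  have hNdec : star (1 - A ^ 2) * (1 - A ^ 2)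
      = V * Matrix.diagonal (fun i => ((4 - 4 * h i ^ 2 : ℝ) : ℂ)) * star V := by
    have h1A : 1 - A ^ 2 = V * (1 - T * T) * star V := by
      rw [Matrix.mul_sub, Matrix.sub_mul, Matrix.mul_one, hV1, ← conj_mul, hAT, pow_two]
    rw [h1A, conj_star, conj_mul]
    congr 1
    congr 1
    have hTTT : star T * (T * T) = T := by rw [← Matrix.mul_assoc, hT2, one_mul]
    have q : (star T * star T) * (T * T) = 1 := by
      rw [Matrix.mul_assoc, hTTT, hT2]
    have expand : star (1 - T * T) * (1 - T * T)
        = 1 - T * T - star T * star T + (star T * star T) * (T * T) := by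
      rw [star_sub, star_one, star_mul, Matrix.sub_mul, Matrix.mul_sub, Matrix.mul_sub,
        one_mul, one_mul, Matrix.mul_one]
      abel
    rw [expand, q]
    have e2 : T * T + star T * star T
        = Matrix.diagonal (fun i => ((2 * h i : ℝ) : ℂ))
          * Matrix.diagonal (fun i => ((2 * h i : ℝ) : ℂ)) - (1 + 1) := by
      rw [← hsum, mul_add, add_mul, add_mul, hT1, hT2]
      abel
    have e4 : (1 : Matrix (Fin d) (Fin d) ℂ) - T * T - star T * star T + 1
        = (1 + 1 + (1 + 1)) - (T * T + star T * star T + (1 + 1)) := by abel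
    have e5 : T * T + star T * star T + (1 + 1)
        = Matrix.diagonal (fun i => ((2 * h i : ℝ) : ℂ))
          * Matrix.diagonal (fun i => ((2 * h i : ℝ) : ℂ)) := by
      rw [e2]
      abel
    rw [e4, e5, Matrix.diagonal_mul_diagonal]
    ext i j
    by_cases hij : i = j
    · subst hij
      simp only [Matrix.sub_apply, Matrix.add_apply, Matrix.one_apply_eq,
        Matrix.diagonal_apply_eq]
      push_cast
      ring
    · simp [Matrix.one_apply_ne hij, Matrix.diagonal_apply_ne _ hij]
  have habs : ∀ i, |h i| ≤ 1 := by
    intro i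
    have h0 : (T * star T) i i = 1 := by rw [hT1, Matrix.one_apply_eq]
    rw [Matrix.mul_apply] at h0
    have hterm : ∀ j, T i j * (star T) j i = ((Complex.normSq (T i j) : ℝ) : ℂ) := by
      intro j
      rw [Matrix.star_apply]; exact Complex.mul_conj _
    have h0' : ∑ j, Complex.normSq (T i j) = 1 := by
      rw [Fintype.sum_congr _ _ hterm] at h0
      exact_mod_cast h0
    have hnormSq : Complex.normSq (T i i) ≤ 1 := by
      have hle := Finset.single_le_sum (f := fun j => Complex.normSq (T i j))
        (fun j _ => Complex.normSq_nonneg _) (Finset.mem_univ i)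
      linarith [h0']
    have hdiag : h i = (T i i).re := by
      have h2 := hsum' i i
      rw [Matrix.diagonal_apply_eq] at h2
      have h3 : T i i + star (T i i) = ((2 * (T i i).re : ℝ) : ℂ) := by
        push_cast
        rw [show ((2:ℂ) * (T i i).re) = (T i i).re + (T i i).re by ring]
        rw [show (star (T i i)) = (starRingEnd ℂ) (T i i) from rfl]
        rw [Complex.add_conj]
        push_cast
        ring
      have h4 : ((2 * h i : ℝ) : ℂ) = ((2 * (T i i).re : ℝ) : ℂ) := by rw [← h2, h3]
      have h5 := Complex.ofReal_inj.mp h4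
      linarith
    have hre2 : (T i i).re ^ 2 ≤ 1 := by
      have := Complex.normSq_apply (T i i)
      nlinarith [sq_nonneg (T i i).im]
    rw [hdiag, abs_le]
    constructor
    · nlinarith [sq_nonneg ((T i i).re + 1)]
    · nlinarith [sq_nonneg ((T i i).re - 1)]
  refine ⟨B, hBmem, hB2, ?_⟩
  intro p hp
  have hp0 : 0 < p := lt_of_lt_of_le one_pos hp
  have eM : ∑ i, Real.sqrt ((Matrix.isHermitian_conjTranspose_mul_self (B - A)).eigenvalues i) ^ p
      = ∑ i, Real.sqrt (2 - 2 * |h i|) ^ p :=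
    sum_eig_conj_diag (Matrix.isHermitian_conjTranspose_mul_self (B - A)) hVmem
      (fun i => 2 - 2 * |h i|) hMdec (fun x => Real.sqrt x ^ p)
  have eN : ∑ i, Real.sqrt ((Matrix.isHermitian_conjTranspose_mul_self (1 - A ^ 2)).eigenvalues i) ^ p
      = ∑ i, Real.sqrt (4 - 4 * h i ^ 2) ^ p :=
    sum_eig_conj_diag (Matrix.isHermitian_conjTranspose_mul_self (1 - A ^ 2)) hVmem
      (fun i => 4 - 4 * h i ^ 2) hNdec (fun x => Real.sqrt x ^ p)
  rw [schattenNorm, schattenNorm, eM, eN]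
  have hsumle : ∑ i, Real.sqrt (2 - 2 * |h i|) ^ p ≤ ∑ i, Real.sqrt (4 - 4 * h i ^ 2) ^ p := by
    apply Finset.sum_le_sum
    intro i _
    apply Real.rpow_le_rpow (Real.sqrt_nonneg _) _ (le_trans zero_le_one hp)
    apply Real.sqrt_le_sqrt
    nlinarith [habs i, abs_nonneg (h i), sq_abs (h i)]
  apply Real.rpow_le_rpow _ hsumle (by positivity)
  exact Finset.sum_nonneg fun i _ => Real.rpow_nonneg (Real.sqrt_nonneg _) p
end

section
/- For every unitary A ∈ U(d) there exists a unitary involution B ∈ U(d) (B² = 1) such that ‖B − A‖_op ≤ ‖1 − A²‖_op. -/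
open scoped Matrix ComplexOrder

lemma sign_close_aux (z : ℂ) (hz1 : ‖z‖ = 1) :
    ‖(if 0 ≤ z.re then (1:ℂ) else -1) - z‖ ≤ ‖1 - z ^ 2‖ := by
  have hfact : (1 : ℂ) - z ^ 2 = (1 - z) * (1 + z) := by ring
  have hnz : Complex.normSq z = 1 := by
    rw [Complex.normSq_eq_norm_sq, hz1]; norm_num
  have hre : z.re * z.re + z.im * z.im = 1 := by
    simpa [Complex.normSq_apply] using hnz
  rw [hfact, norm_mul]
  by_cases h : 0 ≤ z.re
  · rw [if_pos h]
    have h1le : (1 : ℝ) ≤ ‖1 + z‖ := by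
      have hsq : ‖1 + z‖ ^ 2 = 2 + 2 * z.re := by
        rw [Complex.sq_norm]
        simp only [Complex.normSq_apply, Complex.add_re, Complex.add_im, Complex.one_re,
          Complex.one_im]
        nlinarith
      nlinarith [norm_nonneg ((1 : ℂ) + z)]
    calc ‖(1 : ℂ) - z‖ = ‖(1 : ℂ) - z‖ * 1 := by ring
      _ ≤ ‖(1 : ℂ) - z‖ * ‖1 + z‖ := mul_le_mul_of_nonneg_left h1le (norm_nonneg _)
  · rw [if_neg h]
    have heq : ‖(-1 : ℂ) - z‖ = ‖(1 : ℂ) + z‖ := by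
      rw [show (-1 : ℂ) - z = -(1 + z) by ring, norm_neg]
    have h1le : (1 : ℝ) ≤ ‖1 - z‖ := by
      have hsq : ‖1 - z‖ ^ 2 = 2 - 2 * z.re := by
        rw [Complex.sq_norm]
        simp only [Complex.normSq_apply, Complex.sub_re, Complex.sub_im, Complex.one_re,
          Complex.one_im]
        nlinarith
      nlinarith [norm_nonneg ((1 : ℂ) - z)]
    calc ‖(-1 : ℂ) - z‖ = 1 * ‖(1:ℂ) + z‖ := by rw [heq]; ring
      _ ≤ ‖(1 : ℂ) - z‖ * ‖1 + z‖ := mul_le_mul_of_nonneg_right h1le (norm_nonneg _)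

lemma exists_involution_close_unitary {𝔸 : Type*} [CStarAlgebra 𝔸] (T : 𝔸)
    (hTu : T ∈ unitary 𝔸) (hspecfin : (spectrum ℂ T).Finite) :
    ∃ S ∈ unitary 𝔸, S * S = 1 ∧ ‖S - T‖ ≤ ‖1 - T ^ 2‖ := by
  have hN : IsStarNormal T := isStarNormal_of_mem_unitary hTu
  have hcircle : ∀ z ∈ spectrum ℂ T, ‖z‖ = 1 := fun z hz => by
    simpa using spectrum.subset_circle_of_unitary hTu hz
  set f : ℂ → ℂ := fun z => if 0 ≤ z.re then 1 else -1 with hf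
  have hfc : ContinuousOn f (spectrum ℂ T) := hspecfin.continuousOn _
  have hsq : ∀ z, f z * f z = 1 := fun z => by
    by_cases h : 0 ≤ z.re <;> simp [hf, h]
  have hstar : ∀ z, star (f z) = f z := fun z => by
    by_cases h : 0 ≤ z.re <;> simp [hf, h]
  have hSsq : cfc f T * cfc f T = 1 := by
    rw [← cfc_mul f f T hfc hfc]
    calc cfc (fun z => f z * f z) T = cfc (fun _ : ℂ => (1 : ℂ)) T :=
          cfc_congr fun z _ => hsq z
      _ = 1 := cfc_const_one ℂ T
  have hSstar : star (cfc f T) = cfc f T := by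
    rw [← cfc_star]
    exact cfc_congr fun z _ => hstar z
  refine ⟨cfc f T, ⟨by rw [hSstar]; exact hSsq, by rw [hSstar]; exact hSsq⟩, hSsq, ?_⟩
  have hg : (1 : 𝔸) - T ^ 2 = cfc (fun z : ℂ => 1 - z ^ 2) T := by
    rw [cfc_sub (fun _ : ℂ => (1:ℂ)) (fun z : ℂ => z ^ 2) T continuousOn_const
      ((continuous_pow 2).continuousOn), cfc_const_one ℂ T, cfc_pow_id (R := ℂ) T]
  have hd : cfc f T - T = cfc (fun z : ℂ => f z - z) T := by
    rw [cfc_sub f (fun z : ℂ => z) T hfc continuous_id.continuousOn, cfc_id' ℂ T]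
  rw [hd]
  apply norm_cfc_le (norm_nonneg _)
  intro z hz
  refine (sign_close_aux z (hcircle z hz)).trans ?_
  rw [hg]
  exact norm_apply_le_norm_cfc (fun z : ℂ => 1 - z ^ 2) T hz
    ((continuous_const.sub (continuous_pow 2)).continuousOn) hN

theorem exists_involution_close_opNorm {d : ℕ} (A : Matrix (Fin d) (Fin d) ℂ)
    (hA : A ∈ Matrix.unitaryGroup (Fin d) ℂ) :
    ∃ B ∈ Matrix.unitaryGroup (Fin d) ℂ, B ^ 2 = 1 ∧
      opNorm (B - A) ≤ opNorm (1 - A ^ 2) := by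
  set φ := Matrix.toEuclideanCLM (𝕜 := ℂ) (n := Fin d) with hφ
  have hA1 : star A * A = 1 := Matrix.mem_unitaryGroup_iff'.mp hA
  have hA2 : A * star A = 1 := Matrix.mem_unitaryGroup_iff.mp hA
  have hTu : φ A ∈ unitary _ :=
    ⟨by rw [← map_star, ← map_mul, hA1, map_one],
     by rw [← map_star, ← map_mul, hA2, map_one]⟩
  have hspecfin : (spectrum ℂ (φ A)).Finite := by
    rw [AlgEquiv.spectrum_eq φ A]; exact A.finite_spectrum
  obtain ⟨S, hSu, hSsq, hle⟩ := exists_involution_close_unitary (φ A) hTu hspecfin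
  refine ⟨φ.symm S, ?_, ?_, ?_⟩
  · set_option synthInstance.maxHeartbeats 200000 in
    rw [Matrix.mem_unitaryGroup_iff', ← map_star, ← map_mul, hSu.1, map_one]
  · rw [sq, ← map_mul, hSsq, map_one]
  · have h1 : φ (φ.symm S - A) = S - φ A := by
      rw [map_sub, StarAlgEquiv.apply_symm_apply]
    have h2 : φ (1 - A ^ 2) = 1 - φ A ^ 2 := by
      rw [map_sub, map_one, map_pow]
    unfold opNorm
    rw [← hφ, h1, h2]
    exact hle
end

section
/- For every M ∈ M_n(ℂ) there exists a unitary R ∈ U(n) such that ‖M − R‖_p ≤ ‖M*M − 1‖_p, for every Schatten p-norm with 1 ≤ p < ∞. -/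
open scoped Matrix ComplexOrder

open scoped Matrix ComplexOrder
open Matrix Polynomial

/-- det of x•1 - (U * diagonal f * star U) is ∏ (x - f i). -/
lemma det_smul_one_sub_conj {n : ℕ} {U : Matrix (Fin n) (Fin n) ℂ}
    (hU : U ∈ Matrix.unitaryGroup (Fin n) ℂ) (f : Fin n → ℝ) (x : ℂ) :
    Matrix.det (x • (1 : Matrix (Fin n) (Fin n) ℂ) - U * Matrix.diagonal ((↑) ∘ f) * star U)
      = ∏ i, (x - (f i : ℂ)) := by
  have h1 : U * star U = 1 := Matrix.mem_unitaryGroup_iff.mp hU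
  have key : x • (1 : Matrix (Fin n) (Fin n) ℂ) - U * Matrix.diagonal ((↑) ∘ f) * star U
      = U * (x • (1 : Matrix (Fin n) (Fin n) ℂ) - Matrix.diagonal ((↑) ∘ f)) * star U := by
    rw [Matrix.mul_sub, Matrix.sub_mul]
    congr 1
    rw [Matrix.mul_smul, mul_one, Matrix.smul_mul, h1]
  rw [key, Matrix.det_mul, Matrix.det_mul]
  have h2 : U.det * (star U).det = 1 := by
    rw [← Matrix.det_mul, h1, Matrix.det_one]
  rw [mul_right_comm, h2, one_mul, ← Matrix.diagonal_one, ← Matrix.diagonal_smul,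
    Matrix.diagonal_sub, Matrix.det_diagonal]
  simp

lemma eig_multiset {n : ℕ} {A : Matrix (Fin n) (Fin n) ℂ} (hA : A.IsHermitian)
    {U : Matrix (Fin n) (Fin n) ℂ} (hU : U ∈ Matrix.unitaryGroup (Fin n) ℂ) {e : Fin n → ℝ}
    (h : A = U * Matrix.diagonal ((↑) ∘ e) * star U) :
    Finset.univ.val.map hA.eigenvalues = Finset.univ.val.map e := by
  -- products agree for all complex x
  have hprod : ∀ x : ℂ, ∏ i, (x - (hA.eigenvalues i : ℂ)) = ∏ i, (x - (e i : ℂ)) := by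
    intro x
    have e1 := det_smul_one_sub_conj (Matrix.IsHermitian.eigenvectorUnitary hA).2 hA.eigenvalues x
    have hsp : A = (hA.eigenvectorUnitary : Matrix (Fin n) (Fin n) ℂ)
        * Matrix.diagonal ((↑) ∘ hA.eigenvalues)
        * star (hA.eigenvectorUnitary : Matrix (Fin n) (Fin n) ℂ) := hA.spectral_theorem
    rw [← hsp] at e1
    have e2 := det_smul_one_sub_conj hU e x
    rw [← h] at e2
    exact e1.symm.trans e2
  -- products agree for all real x
  have hprodR : ∀ x : ℝ, ∏ i, (x - hA.eigenvalues i) = ∏ i, (x - e i) := by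
    intro x
    have := hprod (x : ℂ)
    have h2 : ((∏ i, (x - hA.eigenvalues i) : ℝ) : ℂ) = ((∏ i, (x - e i) : ℝ) : ℂ) := by
      push_cast
      exact this
    exact_mod_cast h2
  -- polynomial equality
  have hpoly : ((Finset.univ.val.map hA.eigenvalues).map fun a => (X : ℝ[X]) - C a).prod
      = ((Finset.univ.val.map e).map fun a => (X : ℝ[X]) - C a).prod := by
    apply Polynomial.funext
    intro x
    rw [Polynomial.eval_multiset_prod, Polynomial.eval_multiset_prod]
    simp only [Multiset.map_map, Function.comp]
    simp only [Polynomial.eval_sub, Polynomial.eval_X, Polynomial.eval_C]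
    rw [← Finset.prod_eq_multiset_prod, ← Finset.prod_eq_multiset_prod]
    exact hprodR x
  have := congrArg Polynomial.roots hpoly
  rwa [Polynomial.roots_multiset_prod_X_sub_C, Polynomial.roots_multiset_prod_X_sub_C] at this


lemma exists_unitary_factor {n : ℕ} (A : Matrix (Fin n) (Fin n) ℂ) (c : Fin n → ℝ)
    (hAA : Aᴴ * A = Matrix.diagonal fun i => ((c i : ℂ))^2) :
    ∃ V ∈ Matrix.unitaryGroup (Fin n) ℂ, A = V * Matrix.diagonal ((↑) ∘ c) := by
  classical
  have hcol : ∀ i j, ∑ k, (starRingEnd ℂ) (A k i) * A k j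
      = if i = j then (c i : ℂ)^2 else 0 := by
    intro i j
    have := congrFun (congrFun hAA i) j
    simpa [Matrix.mul_apply, Matrix.conjTranspose_apply, Matrix.diagonal_apply] using this
  -- the normalized columns
  set v : Fin n → EuclideanSpace ℂ (Fin n) :=
    fun j => (c j : ℂ)⁻¹ • (WithLp.equiv 2 (Fin n → ℂ)).symm (Aᵀ j) with hv_def
  have hv_apply : ∀ j i, v j i = (c j : ℂ)⁻¹ * A i j := by
    intro j i
    simp [hv_def, Matrix.transpose_apply]
  have hinner : ∀ i j, inner ℂ (v i) (v j)
      = ((c i : ℂ))⁻¹ * (c j : ℂ)⁻¹ * (if i = j then (c i : ℂ)^2 else 0) := by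
    intro i j
    rw [PiLp.inner_apply]
    simp only [RCLike.inner_apply, hv_apply]
    rw [← hcol i j, Finset.mul_sum]
    refine Finset.sum_congr rfl fun k _ => ?_
    simp only [_root_.map_mul, map_inv₀, Complex.conj_ofReal]
    ring
  have hv_on : Orthonormal ℂ (Set.restrict {j | c j ≠ 0} v) := by
    rw [orthonormal_iff_ite]
    rintro ⟨i, hi⟩ ⟨j, hj⟩
    show inner ℂ (v i) (v j) = _
    rw [hinner]
    simp only [Set.mem_setOf_eq] at hi hj
    have hci : (c i : ℂ) ≠ 0 := by exact_mod_cast hi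
    by_cases h : i = j
    · subst h
      simp [Subtype.ext_iff, pow_two]
      field_simp
    · have : (⟨i, hi⟩ : {j | c j ≠ 0}) ≠ ⟨j, hj⟩ := by simpa [Subtype.ext_iff] using h
      simp [h, this]
  obtain ⟨b, hb⟩ := hv_on.exists_orthonormalBasis_extension_of_card_eq
    (by simp)
  refine ⟨Matrix.of fun i j => b j i, ?_, ?_⟩
  · rw [Matrix.mem_unitaryGroup_iff']
    ext i j
    have := (orthonormal_iff_ite.mp b.orthonormal) i j
    rw [PiLp.inner_apply] at this
    simp only [RCLike.inner_apply] at this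
    simpa [Matrix.mul_apply, Matrix.star_apply, Matrix.one_apply, mul_comm] using this
  · ext i j
    rw [Matrix.mul_diagonal]
    by_cases hj : c j = 0
    · -- column j of A is zero
      have h0 : ∑ k, Complex.normSq (A k j) = 0 := by
        have hthis := hcol j j
        rw [if_pos rfl, hj] at hthis
        have h2 : ∑ k, ((Complex.normSq (A k j) : ℂ)) = 0 := by
          rw [Finset.sum_congr rfl fun k _ => Complex.normSq_eq_conj_mul_self, hthis]
          norm_num
        exact_mod_cast h2
      have hz : Complex.normSq (A i j) = 0 := by
        have := (Finset.sum_eq_zero_iff_of_nonneg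
          (fun k _ => Complex.normSq_nonneg (A k j))).mp h0 i (Finset.mem_univ i)
        exact this
      simp [Complex.normSq_eq_zero.mp hz, hj]
    · have hbj : b j = v j := hb j hj
      have hcj : (c j : ℂ) ≠ 0 := by exact_mod_cast hj
      simp only [Matrix.of_apply, hbj, hv_apply, Function.comp_apply]
      field_simp


-- helper: conjugation-squared computation
lemma conj_diag_sq {n : ℕ} {U V : Matrix (Fin n) (Fin n) ℂ}
    (hU1 : star U * U = 1) (hV1 : star V * V = 1) (f : Fin n → ℝ) :
    (V * Matrix.diagonal ((↑) ∘ f) * star U)ᴴ * (V * Matrix.diagonal ((↑) ∘ f) * star U)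
      = U * Matrix.diagonal ((↑) ∘ fun i => (f i)^2) * star U := by
  have hstarf : star ((↑) ∘ f : Fin n → ℂ) = (↑) ∘ f := by
    funext i
    exact Complex.conj_ofReal (f i)
  have hd : (Matrix.diagonal ((↑) ∘ f : Fin n → ℂ))ᴴ = Matrix.diagonal ((↑) ∘ f) := by
    rw [Matrix.diagonal_conjTranspose, hstarf]
  rw [Matrix.conjTranspose_mul, Matrix.conjTranspose_mul, hd,
    ← Matrix.star_eq_conjTranspose V, ← Matrix.star_eq_conjTranspose (star U), star_star]
  have expand : U * (Matrix.diagonal ((↑) ∘ f) * star V) * (V * Matrix.diagonal ((↑) ∘ f) * star U)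
      = U * (Matrix.diagonal ((↑) ∘ f) * ((star V * V) * Matrix.diagonal ((↑) ∘ f))) * star U := by
    noncomm_ring
  have hsq : (fun i => ((↑) ∘ f : Fin n → ℂ) i * ((↑) ∘ f) i) = ((↑) ∘ fun i => (f i)^2 : Fin n → ℂ) := by
    funext i
    simp [Function.comp, pow_two]
  rw [expand, hV1, one_mul, Matrix.diagonal_mul_diagonal, hsq]

-- helper: sums of composed functions over equal multisets agree
lemma sum_comp_of_multiset_eq {n : ℕ} {a b : Fin n → ℝ}
    (h : Finset.univ.val.map a = Finset.univ.val.map b) (g : ℝ → ℝ) :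
    ∑ i, g (a i) = ∑ i, g (b i) := by
  have := congrArg (fun s => (s.map g).sum) h
  simpa [Finset.sum, Multiset.map_map, Function.comp_def] using this


theorem exists_unitary_close_schatten {n : ℕ} (M : Matrix (Fin n) (Fin n) ℂ) :
    ∃ R ∈ Matrix.unitaryGroup (Fin n) ℂ,
      ∀ p : ℝ, 1 ≤ p → schattenNorm p (M - R) ≤ schattenNorm p (Mᴴ * M - 1) := by
  classical
  have hH : (Mᴴ * M).PosSemidef := Matrix.posSemidef_conjTranspose_mul_self M
  set U : Matrix (Fin n) (Fin n) ℂ := (hH.1.eigenvectorUnitary : Matrix (Fin n) (Fin n) ℂ)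
    with hU_def
  have hU : U ∈ Matrix.unitaryGroup (Fin n) ℂ := hH.1.eigenvectorUnitary.2
  set d : Fin n → ℝ := hH.1.eigenvalues with hd_def
  have hd : ∀ i, 0 ≤ d i := fun i => hH.eigenvalues_nonneg i
  set c : Fin n → ℝ := fun i => Real.sqrt (d i) with hc_def
  have hc : ∀ i, 0 ≤ c i := fun i => Real.sqrt_nonneg _
  have hc2 : ∀ i, c i ^ 2 = d i := fun i => Real.sq_sqrt (hd i)
  have hspec : Mᴴ * M = U * Matrix.diagonal ((↑) ∘ d) * star U := hH.1.spectral_theorem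
  have hU1 : star U * U = 1 := Matrix.mem_unitaryGroup_iff'.mp hU
  have hU2 : U * star U = 1 := Matrix.mem_unitaryGroup_iff.mp hU
  -- singular value decomposition
  have hAA : (M * U)ᴴ * (M * U) = Matrix.diagonal fun i => ((c i : ℂ))^2 := by
    rw [Matrix.conjTranspose_mul]
    have step : Uᴴ * Mᴴ * (M * U) = Uᴴ * (Mᴴ * M) * U := by noncomm_ring
    rw [step, hspec, ← Matrix.star_eq_conjTranspose U]
    have step2 : star U * (U * Matrix.diagonal ((↑) ∘ d) * star U) * U
        = (star U * U) * Matrix.diagonal ((↑) ∘ d) * (star U * U) := by noncomm_ring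
    have hdc : ((↑) ∘ d : Fin n → ℂ) = fun i => ((c i : ℂ))^2 := by
      funext i
      show (d i : ℂ) = (c i : ℂ)^2
      rw [← hc2 i]
      push_cast
      ring
    rw [step2, hU1, one_mul, mul_one, hdc]
  obtain ⟨V, hV, hAV⟩ := exists_unitary_factor (M * U) c hAA
  have hV1 : star V * V = 1 := Matrix.mem_unitaryGroup_iff'.mp hV
  have hM : M = V * Matrix.diagonal ((↑) ∘ c) * star U := by
    calc M = M * (U * star U) := by rw [hU2, mul_one]
    _ = (M * U) * star U := by rw [mul_assoc]
    _ = V * Matrix.diagonal ((↑) ∘ c) * star U := by rw [hAV]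
  refine ⟨V * star U, mul_mem hV (Unitary.star_mem hU), ?_⟩
  intro p hp
  have hp0 : (0:ℝ) ≤ p := le_trans zero_le_one hp
  -- the difference as a conjugated diagonal
  have hMR : M - V * star U = V * Matrix.diagonal ((↑) ∘ fun i => c i - 1) * star U := by
    rw [hM]
    have h1 : Matrix.diagonal ((↑) ∘ fun i => c i - 1 : Fin n → ℂ)
        = Matrix.diagonal ((↑) ∘ c) - 1 := by
      ext i j
      by_cases h : i = j <;>
        simp [Matrix.diagonal_apply, Matrix.one_apply, h, Complex.ofReal_sub]
    rw [h1]
    noncomm_ring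
  have hBB : (M - V * star U)ᴴ * (M - V * star U)
      = U * Matrix.diagonal ((↑) ∘ fun i => (c i - 1)^2) * star U := by
    rw [hMR]
    exact conj_diag_sq hU1 hV1 (fun i => c i - 1)
  -- M†M - 1 as a conjugated diagonal
  have hC : Mᴴ * M - 1 = U * Matrix.diagonal ((↑) ∘ fun i => d i - 1) * star U := by
    rw [hspec]
    have h1 : Matrix.diagonal ((↑) ∘ fun i => d i - 1 : Fin n → ℂ)
        = Matrix.diagonal ((↑) ∘ d) - 1 := by
      ext i j
      by_cases h : i = j <;>
        simp [Matrix.diagonal_apply, Matrix.one_apply, h, Complex.ofReal_sub]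
    rw [h1]
    have h2 : U * (Matrix.diagonal ((↑) ∘ d) - 1) * star U
        = U * Matrix.diagonal ((↑) ∘ d) * star U - U * star U := by noncomm_ring
    rw [h2, hU2]
  have hCC : (Mᴴ * M - 1)ᴴ * (Mᴴ * M - 1)
      = U * Matrix.diagonal ((↑) ∘ fun i => (d i - 1)^2) * star U := by
    rw [hC]
    exact conj_diag_sq hU1 hU1 (fun i => d i - 1)
  -- eigenvalue multisets
  have hm1 := eig_multiset (Matrix.isHermitian_conjTranspose_mul_self (M - V * star U)) hU hBB
  have hm2 := eig_multiset (Matrix.isHermitian_conjTranspose_mul_self (Mᴴ * M - 1)) hU hCC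
  -- compute the Schatten norms
  have e1 : schattenNorm p (M - V * star U) = (∑ i, |c i - 1| ^ p) ^ (1/p) := by
    simp only [schattenNorm]
    congr 1
    rw [sum_comp_of_multiset_eq hm1 (fun x => Real.sqrt x ^ p)]
    refine Finset.sum_congr rfl fun i _ => ?_
    rw [Real.sqrt_sq_eq_abs]
  have e2 : schattenNorm p (Mᴴ * M - 1) = (∑ i, |d i - 1| ^ p) ^ (1/p) := by
    simp only [schattenNorm]
    congr 1
    rw [sum_comp_of_multiset_eq hm2 (fun x => Real.sqrt x ^ p)]
    refine Finset.sum_congr rfl fun i _ => ?_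
    rw [Real.sqrt_sq_eq_abs]
  rw [e1, e2]
  -- final inequality
  have key : ∀ i, |c i - 1| ≤ |d i - 1| := by
    intro i
    have hd_eq : d i - 1 = (c i - 1) * (c i + 1) := by rw [← hc2 i]; ring
    rw [hd_eq, abs_mul]
    have h1 : (1:ℝ) ≤ |c i + 1| := by
      rw [abs_of_nonneg (by linarith [hc i])]
      linarith [hc i]
    calc |c i - 1| = |c i - 1| * 1 := by ring
    _ ≤ |c i - 1| * |c i + 1| := by
        exact mul_le_mul_of_nonneg_left h1 (abs_nonneg _)
  refine Real.rpow_le_rpow (Finset.sum_nonneg fun i _ => Real.rpow_nonneg (abs_nonneg _) p)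
    (Finset.sum_le_sum fun i _ => Real.rpow_le_rpow (abs_nonneg _) (key i) hp0) (by positivity)
end

section
/- For every M ∈ M_n(ℂ) there exists a unitary R ∈ U(n) such that ‖M − R‖_op ≤ ‖M*M − 1‖_op. -/
open scoped Matrix ComplexOrder

section aux

variable {E : Type*} [NormedAddCommGroup E] [InnerProductSpace ℂ E]

lemma aux_norm_sq_sum {ι : Type*} [Fintype ι] {v : ι → E} (hv : Orthonormal ℂ v) (w : ι → ℂ) :
    ‖∑ i, w i • v i‖ ^ 2 = ∑ i, ‖w i‖ ^ 2 := by
  have h := hv.inner_sum w w Finset.univ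
  rw [← inner_self_eq_norm_sq (𝕜 := ℂ), h]
  simp [RCLike.conj_mul, ← Complex.ofReal_pow]

lemma aux_abs_sqrt_sub_one_le {a : ℝ} (ha : 0 ≤ a) : |Real.sqrt a - 1| ≤ |a - 1| := by
  have h2 : Real.sqrt a ^ 2 = a := Real.sq_sqrt ha
  have h0 : 0 ≤ Real.sqrt a := Real.sqrt_nonneg a
  rcases le_total (Real.sqrt a) 1 with h | h
  · rw [abs_of_nonpos (by linarith), abs_of_nonpos (by nlinarith)]
    nlinarith
  · rw [abs_of_nonneg (by linarith), abs_of_nonneg (by nlinarith)]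
    nlinarith

end aux

set_option maxHeartbeats 1000000 in
set_option synthInstance.maxHeartbeats 400000 in
theorem exists_unitary_close_opNorm {n : ℕ} (M : Matrix (Fin n) (Fin n) ℂ) :
    ∃ R ∈ Matrix.unitaryGroup (Fin n) ℂ,
      opNorm (M - R) ≤ opNorm (Mᴴ * M - 1) := by
  classical
  set E := EuclideanSpace ℂ (Fin n)
  have hH : (Mᴴ * M).IsHermitian := Matrix.isHermitian_conjTranspose_mul_self M
  set lam : Fin n → ℝ := hH.eigenvalues with hlam
  have hlam0 : ∀ i, 0 ≤ lam i := Matrix.eigenvalues_conjTranspose_mul_self_nonneg M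
  set u : OrthonormalBasis (Fin n) ℂ E := hH.eigenvectorBasis with hu
  set T : E →L[ℂ] E := Matrix.toEuclideanCLM (𝕜 := ℂ) M with hT
  -- action of H on the eigenbasis
  have hHu : ∀ j, Matrix.toEuclideanCLM (𝕜 := ℂ) (Mᴴ * M) (u j) = ((lam j : ℂ)) • u j := by
    intro j
    have h1 := hH.mulVec_eigenvectorBasis j
    apply PiLp.ext
    intro i
    have : (Matrix.toEuclideanCLM (𝕜 := ℂ) (Mᴴ * M) (u j)) i = ((Mᴴ * M) *ᵥ ⇑(u j)) i := rfl
    rw [this, h1]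
    rfl
  -- inner products of images
  have hinner : ∀ i j, (inner ℂ (T (u i)) (T (u j)) : ℂ) = if i = j then (lam j : ℂ) else 0 := by
    intro i j
    have hadj : (ContinuousLinearMap.adjoint T) = Matrix.toEuclideanCLM (𝕜 := ℂ) Mᴴ := by
      rw [← ContinuousLinearMap.star_eq_adjoint, hT, ← map_star]
      rfl
    have : (inner ℂ (T (u i)) (T (u j)) : ℂ)
        = inner ℂ (u i) (Matrix.toEuclideanCLM (𝕜 := ℂ) (Mᴴ * M) (u j)) := by
      rw [← ContinuousLinearMap.adjoint_inner_right, hadj, map_mul]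
      rfl
    rw [this, hHu j, inner_smul_right]
    rcases eq_or_ne i j with rfl | hne
    · simp [orthonormal_iff_ite.mp u.orthonormal i i]
    · simp [orthonormal_iff_ite.mp u.orthonormal i j, hne]
  -- singular values
  set sig : Fin n → ℝ := fun i => Real.sqrt (lam i) with hsig
  have hsig0 : ∀ i, 0 ≤ sig i := fun i => Real.sqrt_nonneg _
  have hsigsq : ∀ i, sig i ^ 2 = lam i := fun i => Real.sq_sqrt (hlam0 i)
  set s : Set (Fin n) := {i | lam i ≠ 0} with hs
  have hsig_ne : ∀ i ∈ s, sig i ≠ 0 := by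
    intro i hi
    have : lam i ≠ 0 := hi
    intro h0
    exact this (by rw [← hsigsq i, h0]; ring)
  -- an orthonormal family of normalized images
  have hw : Orthonormal ℂ (s.restrict (fun i => (((sig i : ℂ))⁻¹ • T (u i)))) := by
    rw [orthonormal_iff_ite]
    rintro ⟨i, hi⟩ ⟨j, hj⟩
    show inner ℂ (((sig i : ℂ))⁻¹ • T (u i)) (((sig j : ℂ))⁻¹ • T (u j)) = _
    rw [inner_smul_left, inner_smul_right, hinner]
    rcases eq_or_ne i j with rfl | hne
    · have h1 : (sig i : ℂ) ≠ 0 := by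
        exact_mod_cast hsig_ne i hi
      have h2 : ((lam i : ℝ) : ℂ) = (sig i : ℂ) * (sig i : ℂ) := by
        rw [← hsigsq i]; push_cast; ring
      simp only [if_pos rfl, h2, map_inv₀, Complex.conj_ofReal]
      field_simp
      simp
    · simp [hne, Subtype.mk_eq_mk]
  obtain ⟨b, hb⟩ := hw.exists_orthonormalBasis_extension_of_card_eq
    (by simp [E, finrank_euclideanSpace])
  -- key identity : T (u i) = sig i • b i
  have hTu : ∀ i, T (u i) = (sig i : ℂ) • b i := by
    intro i
    by_cases hi : i ∈ s
    · rw [hb i hi]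
      have h1 : (sig i : ℂ) ≠ 0 := by exact_mod_cast hsig_ne i hi
      exact (smul_inv_smul₀ h1 _).symm
    · have hlam_i : lam i = 0 := not_not.mp hi
      have h0 : (inner ℂ (T (u i)) (T (u i)) : ℂ) = 0 := by
        rw [hinner]; simp [hlam_i]
      rw [inner_self_eq_zero.mp h0]
      rw [hsig]
      simp [hlam_i]
  -- the unitary
  set e : E ≃ₗᵢ[ℂ] E := u.repr.trans b.repr.symm with he
  set S : E →L[ℂ] E := (e.toContinuousLinearEquiv : E →L[ℂ] E) with hSdef
  have hSapp : ∀ x, S x = e x := fun x => rfl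
  have hSadj : (ContinuousLinearMap.adjoint S) * S = 1 := by
    refine ContinuousLinearMap.ext fun x => ?_
    apply ext_inner_left ℂ
    intro y
    rw [ContinuousLinearMap.mul_apply, ContinuousLinearMap.adjoint_inner_right,
      ContinuousLinearMap.one_apply, hSapp, hSapp]
    exact e.inner_map_map y x
  set R : Matrix (Fin n) (Fin n) ℂ := (Matrix.toEuclideanCLM (𝕜 := ℂ) (n := Fin n)).symm S with hRdef
  have hRS : Matrix.toEuclideanCLM (𝕜 := ℂ) R = S := by
    rw [hRdef]; exact StarAlgEquiv.apply_symm_apply _ _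
  have hRunit : R ∈ Matrix.unitaryGroup (Fin n) ℂ := by
    rw [Matrix.mem_unitaryGroup_iff']
    rw [hRdef, ← map_star, ← map_mul, ContinuousLinearMap.star_eq_adjoint, hSadj, map_one]
  have hSu : ∀ i, S (u i) = b i := by
    intro i
    rw [hSapp]
    show b.repr.symm (u.repr (u i)) = b i
    rw [OrthonormalBasis.repr_self]
    exact b.repr_symm_single i
  refine ⟨R, hRunit, ?_⟩
  -- the bound on eigenvalue deviations
  set C : ℝ := opNorm (Mᴴ * M - 1) with hC
  have hC0 : 0 ≤ C := norm_nonneg _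
  have hCi : ∀ i, |sig i - 1| ≤ C := by
    intro i
    have hmap : Matrix.toEuclideanCLM (𝕜 := ℂ) (Mᴴ * M - 1) (u i)
        = ((lam i - 1 : ℝ) : ℂ) • u i := by
      rw [map_sub, map_one, ContinuousLinearMap.sub_apply, ContinuousLinearMap.one_apply, hHu]
      push_cast
      rw [sub_smul, one_smul]
    have hnorm : ‖Matrix.toEuclideanCLM (𝕜 := ℂ) (Mᴴ * M - 1) (u i)‖ = |lam i - 1| := by
      rw [hmap, norm_smul, u.orthonormal.1 i, mul_one, Complex.norm_real, Real.norm_eq_abs]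
    have hlamC : |lam i - 1| ≤ C := by
      rw [← hnorm, hC]
      calc ‖Matrix.toEuclideanCLM (𝕜 := ℂ) (Mᴴ * M - 1) (u i)‖
          ≤ ‖Matrix.toEuclideanCLM (𝕜 := ℂ) (n := Fin n) (Mᴴ * M - 1)‖ * ‖u i‖ :=
            ContinuousLinearMap.le_opNorm _ _
        _ = opNorm (Mᴴ * M - 1) := by rw [u.orthonormal.1 i, mul_one]; rfl
    have key : |sig i - 1| ≤ |lam i - 1| := aux_abs_sqrt_sub_one_le (hlam0 i)
    linarith
  -- final operator norm estimate
  unfold opNorm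
  apply ContinuousLinearMap.opNorm_le_bound _ hC0
  intro x
  set c : EuclideanSpace ℂ (Fin n) := u.repr x with hc
  have hx : x = ∑ i, c i • u i := (u.sum_repr x).symm
  have hTx : Matrix.toEuclideanCLM (𝕜 := ℂ) (M - R) x
      = ∑ i, (c i * ((sig i - 1 : ℝ) : ℂ)) • b i := by
    rw [map_sub, hRS]
    conv_lhs => rw [hx]
    rw [map_sum]
    refine Finset.sum_congr rfl fun i _ => ?_
    rw [map_smul, ContinuousLinearMap.sub_apply, ← hT, hTu i, hSu i]
    have hbi : (sig i : ℂ) • b i - b i = ((sig i - 1 : ℝ) : ℂ) • b i := by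
      push_cast
      rw [sub_smul, one_smul]
    rw [hbi, smul_smul]
  have h1 : ‖Matrix.toEuclideanCLM (𝕜 := ℂ) (M - R) x‖ ^ 2
      = ∑ i, ‖c i * ((sig i - 1 : ℝ) : ℂ)‖ ^ 2 := by
    rw [hTx]; exact aux_norm_sq_sum b.orthonormal _
  have h2 : ‖x‖ ^ 2 = ∑ i, ‖c i‖ ^ 2 := by
    conv_lhs => rw [hx]
    exact aux_norm_sq_sum u.orthonormal _
  have h3 : ∑ i, ‖c i * ((sig i - 1 : ℝ) : ℂ)‖ ^ 2 ≤ C ^ 2 * ∑ i, ‖c i‖ ^ 2 := by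
    rw [Finset.mul_sum]
    apply Finset.sum_le_sum
    intro i _
    rw [norm_mul, mul_pow]
    have hb1 : ‖((sig i - 1 : ℝ) : ℂ)‖ ≤ C := by
      rw [Complex.norm_real, Real.norm_eq_abs]; exact hCi i
    have hb3 : ‖((sig i - 1 : ℝ) : ℂ)‖ ^ 2 ≤ C ^ 2 := pow_le_pow_left₀ (norm_nonneg _) hb1 2
    have hb4 : (0 : ℝ) ≤ ‖c i‖ ^ 2 := by positivity
    calc ‖c i‖ ^ 2 * ‖((sig i - 1 : ℝ) : ℂ)‖ ^ 2 ≤ ‖c i‖ ^ 2 * C ^ 2 :=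
          mul_le_mul_of_nonneg_left hb3 hb4
      _ = C ^ 2 * ‖c i‖ ^ 2 := by ring
  have h4 : ‖Matrix.toEuclideanCLM (𝕜 := ℂ) (M - R) x‖ ^ 2 ≤ (C * ‖x‖) ^ 2 := by
    rw [h1, mul_pow, h2]
    exact h3
  exact le_of_pow_le_pow_left₀ two_ne_zero (by positivity) h4
end
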